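/- For the nets N_n (pipeline with t₁ deleted), the directed homology groups satisfy H_k^ε(N_n) = 0 for k > 0 and H₀^ε(N_n) ≅ ℤ, for both ε ∈ {0,1}. -/

import Mathlib

/-! Concrete pipeline Petri nets. States of a net with `m` places are `Fin m → Bool`. -/

/-- The "tail" pipeline net `N` with `m` places `p₁,…,p_m` (0-indexed `0,…,m-1`) and `m`
events `t₂,…,t_{m+1}` (0-indexed: event `j` is `t_{j+2}` with `pre = {p_{j+1}}`, i.e. place
`j`, and `post = {p_{j+2}}`, i.e. place `j+1`, when `j+1 < m`, and `post = ∅` for the last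
event).  `stepT m s e` is the partial firing of event `e` at state `s`. -/
def stepT (m : ℕ) (s : Fin m → Bool) (e : Fin m) : Option (Fin m → Bool) :=
  if s e = true then
    if h : (e : ℕ) + 1 < m then
      if s ⟨(e : ℕ) + 1, h⟩ = false then
        some (Function.update (Function.update s e false) ⟨(e : ℕ) + 1, h⟩ true)
      else none
    else some (Function.update s e false)
  else none

/-- Firing a word (list) of events, `s · (a :: l) = (s · a) · l`. -/
def stepsT (m : ℕ) : (Fin m → Bool) → List (Fin m) → Option (Fin m → Bool)
  | s, [] => some s
  | s, a :: l => (stepT m s a).bind fun s' => stepsT m s' l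

/-- Resources (`pre ∪ post`, as a set of 0-indexed places) of event `e` of the tail net. -/
def resT (m : ℕ) (e : Fin m) : Set ℕ :=
  {x | x = (e : ℕ) ∨ (x = (e : ℕ) + 1 ∧ (e : ℕ) + 1 < m)}

/-- Independence of events of the tail net: disjoint resources. -/
def indepT (m : ℕ) (a b : Fin m) : Prop :=
  ∀ x, ¬(x ∈ resT m a ∧ x ∈ resT m b)

/-- One swap of adjacent independent letters in a word. -/
inductive TraceStep {E : Type} (r : E → E → Prop) : List E → List E → Prop
  | swap (u v : List E) (a b : E) : r a b →
      TraceStep r (u ++ a :: b :: v) (u ++ b :: a :: v)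

/-- Trace equivalence: two words represent the same element of the trace monoid `M(E,I)`
iff they are related by the equivalence closure of adjacent swaps of independent letters. -/
def TraceEquiv {E : Type} (r : E → E → Prop) : List E → List E → Prop :=
  Relation.EqvGen (TraceStep r)

open CategoryTheory CategoryTheory.Limits

theorem stepsT_append (m : ℕ) (x : Fin m → Bool) (l l' : List (Fin m)) :
    stepsT m x (l ++ l') = (stepsT m x l).bind fun s => stepsT m s l' := by
  induction l generalizing x with
  | nil => simp [stepsT]
  | cons a l ih =>
    simp only [List.cons_append, stepsT]
    cases stepT m x a <;> simp [ih]

theorem TraceEquiv.append_left {E : Type} (r : E → E → Prop) (u : List E)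
    {l₁ l₂ : List E} (h : TraceEquiv r l₁ l₂) : TraceEquiv r (u ++ l₁) (u ++ l₂) := by
  induction h with
  | rel a b hab =>
    cases hab with
    | swap u0 v x y hxy =>
      refine Relation.EqvGen.rel _ _ ?_
      rw [← List.append_assoc, ← List.append_assoc]
      exact TraceStep.swap (u ++ u0) v x y hxy
  | refl a => exact Relation.EqvGen.refl _
  | symm a b _ ih => exact Relation.EqvGen.symm _ _ ih
  | trans a b c _ _ ih1 ih2 => exact Relation.EqvGen.trans _ _ _ ih1 ih2

theorem TraceEquiv.append_right {E : Type} (r : E → E → Prop) (u : List E)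
    {l₁ l₂ : List E} (h : TraceEquiv r l₁ l₂) : TraceEquiv r (l₁ ++ u) (l₂ ++ u) := by
  induction h with
  | rel a b hab =>
    cases hab with
    | swap u0 v x y hxy =>
      refine Relation.EqvGen.rel _ _ ?_
      rw [List.append_assoc, List.append_assoc]
      exact TraceStep.swap u0 (v ++ u) x y hxy
  | refl a => exact Relation.EqvGen.refl _
  | symm a b _ ih => exact Relation.EqvGen.symm _ _ ih
  | trans a b c _ _ ih1 ih2 => exact Relation.EqvGen.trans _ _ _ ih1 ih2

theorem TraceEquiv.append {E : Type} (r : E → E → Prop)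
    {l₁ l₂ l₁' l₂' : List E} (h : TraceEquiv r l₁ l₂) (h' : TraceEquiv r l₁' l₂') :
    TraceEquiv r (l₁ ++ l₁') (l₂ ++ l₂') :=
  Relation.EqvGen.trans _ _ _ (TraceEquiv.append_right r l₁' h)
    (TraceEquiv.append_left r l₂ h')

theorem TraceEquiv.length_eq {E : Type} (r : E → E → Prop) {l₁ l₂ : List E}
    (h : TraceEquiv r l₁ l₂) : l₁.length = l₂.length := by
  induction h with
  | rel a b hab => cases hab with | swap u v x y _ => simp
  | refl a => rfl
  | symm a b _ ih => omega
  | trans a b c _ _ ih1 ih2 => omega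

/-- Objects of the state category `K(S)` of the net `N_n` (with `m = n-1` places and
events): the states. -/
structure StN (m : ℕ) : Type where
  s : Fin m → Bool

/-- Morphisms `x → y` are traces: words `l` with `x·l = y`, modulo trace equivalence. -/
def homSetoid (m : ℕ) (x y : StN m) :
    Setoid {l : List (Fin m) // stepsT m x.s l = some y.s} where
  r l₁ l₂ := TraceEquiv (indepT m) l₁.1 l₂.1
  iseqv := ⟨fun l => Relation.EqvGen.refl l.1,
    fun h => Relation.EqvGen.symm _ _ h,
    fun h h' => Relation.EqvGen.trans _ _ _ h h'⟩

/-- The state category `K(S)` of the net `N_n`: objects are states, morphisms are traces,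
composition is concatenation of words. -/
instance (m : ℕ) : Category (StN m) where
  Hom x y := Quotient (homSetoid m x y)
  id x := Quotient.mk _ ⟨[], rfl⟩
  comp {x y z} f g := Quotient.liftOn₂ f g
    (fun l l' => Quotient.mk _ ⟨l.1 ++ l'.1, by
      rw [stepsT_append, l.2]; exact l'.2⟩)
    (fun a b a' b' ha hb => Quotient.sound (TraceEquiv.append _ ha hb))
  id_comp f := Quotient.inductionOn f fun l => rfl
  comp_id f := Quotient.inductionOn f fun l => Quotient.sound (by
    show TraceEquiv _ (l.1 ++ []) l.1
    rw [List.append_nil]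
    exact Relation.EqvGen.refl _)
  assoc f g h := Quotient.inductionOn₃ f g h fun a b c => Quotient.sound (by
    show TraceEquiv _ ((a.1 ++ b.1) ++ c.1) (a.1 ++ (b.1 ++ c.1))
    rw [List.append_assoc]
    exact Relation.EqvGen.refl _)

/-- Whether a morphism of the state category is the identity trace `1`. -/
def isIdTrace (m : ℕ) {x y : StN m} (f : x ⟶ y) : Prop :=
  ∃ p : {l : List (Fin m) // stepsT m x.s l = some y.s},
    f = Quotient.mk _ p ∧ p.1 = []

theorem isIdTrace_mk (m : ℕ) {x y : StN m}
    (l : {l : List (Fin m) // stepsT m x.s l = some y.s}) :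
    isIdTrace m (Quotient.mk (homSetoid m x y) l) ↔ l.1 = [] := by
  constructor
  · rintro ⟨p, hp, hp0⟩
    have := Quotient.exact hp
    have hlen := TraceEquiv.length_eq _ this
    rw [hp0] at hlen
    simpa using List.length_eq_zero_iff.mp (by simpa using hlen)
  · intro h0
    exact ⟨l, rfl, h0⟩

theorem comp_mk (m : ℕ) {x y z : StN m}
    (a : {l : List (Fin m) // stepsT m x.s l = some y.s})
    (b : {l : List (Fin m) // stepsT m y.s l = some z.s})
    (h : stepsT m x.s (a.1 ++ b.1) = some z.s) :
    (Quotient.mk (homSetoid m x y) a ≫ Quotient.mk (homSetoid m y z) b) =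
      (show x ⟶ z from Quotient.mk (homSetoid m x z) ⟨a.1 ++ b.1, h⟩) := rfl

theorem isIdTrace_comp (m : ℕ) {x y z : StN m} (a : x ⟶ y) (b : y ⟶ z) :
    isIdTrace m (a ≫ b) ↔ (isIdTrace m a ∧ isIdTrace m b) := by
  induction a using Quotient.inductionOn with
  | h a =>
  induction b using Quotient.inductionOn with
  | h b =>
  rw [comp_mk m a b (by rw [stepsT_append, a.2]; exact b.2)]
  show isIdTrace m (Quotient.mk (homSetoid m x z) ⟨a.1 ++ b.1, _⟩) ↔ _
  rw [isIdTrace_mk, isIdTrace_mk, isIdTrace_mk]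
  simp

open scoped Classical in
/-- The functor `Δ⁰ℤ : K(S) → Ab`: constant value `ℤ` on objects, a morphism `μ` acts as
the identity if `μ = 1` and as `0` otherwise. -/
noncomputable def Delta0 (m : ℕ) : StN m ⥤ AddCommGrpCat.{0} where
  obj _ := AddCommGrpCat.of ℤ
  map {x y} f := if isIdTrace m f then 𝟙 (AddCommGrpCat.of ℤ) else 0
  map_id x := by
    have h : isIdTrace m (𝟙 x) := ⟨⟨[], rfl⟩, rfl, rfl⟩
    show (if isIdTrace m (𝟙 x) then 𝟙 (AddCommGrpCat.of ℤ) else 0) = 𝟙 (AddCommGrpCat.of ℤ)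
    rw [if_pos h]
  map_comp {x y z} f g := by
    show (if isIdTrace m (f ≫ g) then 𝟙 (AddCommGrpCat.of ℤ) else 0)
        = (if isIdTrace m f then 𝟙 (AddCommGrpCat.of ℤ) else 0) ≫
          (if isIdTrace m g then 𝟙 (AddCommGrpCat.of ℤ) else 0)
    by_cases ha : isIdTrace m f <;> by_cases hb : isIdTrace m g <;>
      simp [isIdTrace_comp, ha, hb]

open scoped Classical in
/-- The functor `Δ¹ℤ : K(S)^op → Ab`. -/
noncomputable def Delta1 (m : ℕ) : (StN m)ᵒᵖ ⥤ AddCommGrpCat.{0} where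
  obj _ := AddCommGrpCat.of ℤ
  map {x y} f := if isIdTrace m f.unop then 𝟙 (AddCommGrpCat.of ℤ) else 0
  map_id x := by
    have h : isIdTrace m (𝟙 x).unop := ⟨⟨[], rfl⟩, rfl, rfl⟩
    show (if isIdTrace m (𝟙 x).unop then 𝟙 (AddCommGrpCat.of ℤ) else 0) = 𝟙 (AddCommGrpCat.of ℤ)
    rw [if_pos h]
  map_comp {x y z} f g := by
    show (if isIdTrace m (f ≫ g).unop then 𝟙 (AddCommGrpCat.of ℤ) else 0)
        = (if isIdTrace m f.unop then 𝟙 (AddCommGrpCat.of ℤ) else 0) ≫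
          (if isIdTrace m g.unop then 𝟙 (AddCommGrpCat.of ℤ) else 0)
    have : (f ≫ g).unop = g.unop ≫ f.unop := rfl
    rw [this]
    by_cases ha : isIdTrace m f.unop <;> by_cases hb : isIdTrace m g.unop <;>
      simp [isIdTrace_comp, ha, hb]


section Abstract
variable {J : Type} [SmallCategory J] {T : J} (hT : IsTerminal T)

noncomputable def colimIsoEvalTerminal :
    (colim : (J ⥤ AddCommGrpCat.{0}) ⥤ AddCommGrpCat.{0}) ≅ (evaluation J AddCommGrpCat.{0}).obj T where
  hom := { app := fun F => colimit.desc F (coconeOfDiagramTerminal hT F)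
           naturality := fun F G α => by
             apply colimit.hom_ext
             intro j
             simp only [colim_obj, colim_map, ι_colimMap_assoc, colimit.ι_desc,
               coconeOfDiagramTerminal_ι_app, evaluation_obj_map, colimit.ι_desc_assoc]
             exact (α.naturality _).symm }
  inv := { app := fun F => colimit.ι F T
           naturality := fun F G α => by simp }
  hom_inv_id := by
    ext F : 2
    apply colimit.hom_ext
    intro j
    simp [coconeOfDiagramTerminal]
  inv_hom_id := by
    ext F : 2
    simp [coconeOfDiagramTerminal, hT.hom_ext (hT.from T) (𝟙 T)]

variable [HasProjectiveResolutions (J ⥤ AddCommGrpCat.{0})]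

theorem isZero_leftDerived_eval (F : J ⥤ AddCommGrpCat.{0}) (n : ℕ) :
    IsZero (((((evaluation J AddCommGrpCat.{0}).obj T).leftDerived (n+1))).obj F) := by
  let P : ProjectiveResolution F := (HasProjectiveResolution.out (Z := F)).some
  refine IsZero.of_iso ?_ (P.isoLeftDerivedObj _ (n+1))
  rw [HomologicalComplex.homologyFunctor_obj,
    ← HomologicalComplex.exactAt_iff_isZero_homology]
  have h : P.complex.ExactAt (n+1) := P.complex_exactAt_succ n
  rw [HomologicalComplex.exactAt_iff] at h ⊢
  refine ShortComplex.exact_of_iso ?_ (h.map ((evaluation J AddCommGrpCat.{0}).obj T))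
  exact ShortComplex.isoMk (Iso.refl _) (Iso.refl _) (Iso.refl _)
    (by exact (Category.id_comp _).trans (Category.comp_id _).symm)
    (by exact (Category.id_comp _).trans (Category.comp_id _).symm)

include hT in
theorem isZero_leftDerived_colim_of_terminal (F : J ⥤ AddCommGrpCat.{0}) (k : ℕ) (hk : 0 < k) :
    IsZero ((((colim : (J ⥤ AddCommGrpCat.{0}) ⥤ AddCommGrpCat.{0}).leftDerived k)).obj F) := by
  obtain ⟨n, rfl⟩ : ∃ n, k = n + 1 := ⟨k - 1, by omega⟩
  have e := colimIsoEvalTerminal hT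
  refine IsZero.of_iso (isZero_leftDerived_eval (T := T) F n) ?_
  refine ⟨(NatTrans.leftDerived e.hom (n+1)).app F, (NatTrans.leftDerived e.inv (n+1)).app F, ?_, ?_⟩
  · rw [← NatTrans.comp_app, ← NatTrans.leftDerived_comp, e.hom_inv_id, NatTrans.leftDerived_id]; rfl
  · rw [← NatTrans.comp_app, ← NatTrans.leftDerived_comp, e.inv_hom_id, NatTrans.leftDerived_id]; rfl

noncomputable def colimObjIso (F : J ⥤ AddCommGrpCat.{0}) :
    (colim : (J ⥤ AddCommGrpCat.{0}) ⥤ AddCommGrpCat.{0}).obj F ≅ F.obj T :=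
  (colimIsoEvalTerminal hT).app F

end Abstract

theorem stepT_apply {m : ℕ} {s t : Fin m → Bool} {e : Fin m} (h : stepT m s e = some t)
    (x : Fin m) :
    t x = if (x : ℕ) = (e : ℕ) then false
      else if (x : ℕ) = (e : ℕ) + 1 then true else s x := by
  unfold stepT at h
  split_ifs at h with h1 h2 h3
  · obtain rfl : _ = t := Option.some_injective _ h
    simp only [Function.update_apply]
    by_cases hx1 : x = ⟨(e : ℕ) + 1, h2⟩
    · subst hx1
      simp [show ((e:ℕ)+1 ≠ (e:ℕ)) from by omega]
    · have : (x : ℕ) ≠ (e : ℕ) + 1 := fun hc => hx1 (Fin.ext hc)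
      rw [if_neg hx1, if_neg this]
      by_cases hx2 : x = e
      · subst hx2; simp
      · have : (x : ℕ) ≠ (e : ℕ) := fun hc => hx2 (Fin.ext hc)
        rw [if_neg hx2, if_neg this]
  · obtain rfl : _ = t := Option.some_injective _ h
    have hx1 : (x : ℕ) ≠ (e : ℕ) + 1 := by have := x.2; omega
    rw [Function.update_apply, if_neg hx1]
    by_cases hx2 : x = e
    · subst hx2; simp
    · have : (x : ℕ) ≠ (e : ℕ) := fun hc => hx2 (Fin.ext hc)
      rw [if_neg hx2, if_neg this]

theorem stepT_enabled {m : ℕ} {s t : Fin m → Bool} {e : Fin m} (h : stepT m s e = some t) :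
    s e = true ∧ ∀ (h2 : (e : ℕ) + 1 < m), s ⟨(e : ℕ) + 1, h2⟩ = false := by
  unfold stepT at h
  split_ifs at h with h1 h2 h3
  · exact ⟨h1, fun _ => h3⟩
  · exact ⟨h1, fun hc => absurd hc h2⟩

theorem stepT_make {m : ℕ} {s : Fin m → Bool} {e : Fin m} (h1 : s e = true)
    (h2 : ∀ (h : (e : ℕ) + 1 < m), s ⟨(e : ℕ) + 1, h⟩ = false) :
    ∃ t, stepT m s e = some t := by
  unfold stepT
  rw [if_pos h1]
  by_cases h : (e : ℕ) + 1 < m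
  · rw [dif_pos h, if_pos (h2 h)]; exact ⟨_, rfl⟩
  · rw [dif_neg h]; exact ⟨_, rfl⟩

theorem indep_of_enabled {m : ℕ} {s ta tb : Fin m → Bool} {a b : Fin m} (hab : a ≠ b)
    (ha : stepT m s a = some ta) (hb : stepT m s b = some tb) : indepT m a b := by
  obtain ⟨ha1, ha2⟩ := stepT_enabled ha
  obtain ⟨hb1, hb2⟩ := stepT_enabled hb
  rintro x ⟨hxa, hxb⟩
  have hvab : (a : ℕ) ≠ (b : ℕ) := fun hc => hab (Fin.ext hc)
  rcases hxa with rfl | ⟨rfl, hma⟩ <;> rcases hxb with h | ⟨h, hmb⟩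
  · exact hvab h
  · -- (a:ℕ) = b+1, b+1 < m : s a = true but s ⟨b+1⟩ = false
    have := hb2 hmb
    rw [show (⟨(b:ℕ)+1, hmb⟩ : Fin m) = a from Fin.ext h.symm] at this
    rw [ha1] at this; simp at this
  · have := ha2 hma
    rw [show (⟨(a:ℕ)+1, hma⟩ : Fin m) = b from Fin.ext h]at this
    rw [hb1] at this; simp at this
  · omega

theorem indep_facts {m : ℕ} {a b : Fin m} (h : indepT m a b) :
    (a : ℕ) ≠ (b : ℕ) ∧ (a : ℕ) ≠ (b : ℕ) + 1 ∧ (b : ℕ) ≠ (a : ℕ) + 1 := by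
  have ha := a.2; have hb := b.2
  refine ⟨fun hc => h a ⟨Or.inl rfl, Or.inl hc⟩, fun hc => ?_, fun hc => ?_⟩
  · exact h a ⟨Or.inl rfl, Or.inr ⟨hc, by omega⟩⟩
  · exact h b ⟨Or.inr ⟨hc, by omega⟩, Or.inl rfl⟩

theorem diamond {m : ℕ} {s ta tb : Fin m → Bool} {a b : Fin m} (hind : indepT m a b)
    (ha : stepT m s a = some ta) (hb : stepT m s b = some tb) :
    ∃ r, stepT m ta b = some r ∧ stepT m tb a = some r := by
  obtain ⟨h1, h2, h3⟩ := indep_facts hind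
  obtain ⟨ha1, ha2⟩ := stepT_enabled ha
  obtain ⟨hb1, hb2⟩ := stepT_enabled hb
  have hab : ta b = true := by
    rw [stepT_apply ha b, if_neg (by omega), if_neg (by omega)]; exact hb1
  have hab2 : ∀ (h : (b:ℕ)+1 < m), ta ⟨(b:ℕ)+1, h⟩ = false := by
    intro h
    rw [stepT_apply ha _, if_neg (by simp; omega), if_neg (by simp; omega)]
    exact hb2 h
  obtain ⟨r, hr⟩ := stepT_make hab hab2
  have hba : tb a = true := by
    rw [stepT_apply hb a, if_neg (by omega), if_neg (by omega)]; exact ha1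
  have hba2 : ∀ (h : (a:ℕ)+1 < m), tb ⟨(a:ℕ)+1, h⟩ = false := by
    intro h
    rw [stepT_apply hb _, if_neg (by simp; omega), if_neg (by simp; omega)]
    exact ha2 h
  obtain ⟨r', hr'⟩ := stepT_make hba hba2
  refine ⟨r, hr, ?_⟩
  rw [hr']
  congr 1
  funext x
  rw [stepT_apply hr' x, stepT_apply hr x, stepT_apply ha x, stepT_apply hb x]
  split_ifs <;> first | rfl | omega

/-- Number of tokens among places `< k`. -/
def Wc (m : ℕ) (s : Fin m → Bool) : ℕ → ℕ
  | 0 => 0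
  | k+1 => Wc m s k + (if h : k < m then (if s ⟨k, h⟩ then 1 else 0) else 0)

theorem Wc_step {m : ℕ} {s t : Fin m → Bool} {a : Fin m} (h : stepT m s a = some t) :
    ∀ k, k ≤ m →
      Wc m t k + (if (a:ℕ) < k ∧ (k ≤ (a:ℕ)+1 ∨ m ≤ (a:ℕ)+1) then 1 else 0) = Wc m s k := by
  intro k
  induction k with
  | zero => simp [Wc]
  | succ k ih =>
    intro hk1
    have hk : k < m := hk1
    have ihk := ih (le_of_lt hk)
    have htv := stepT_apply h ⟨k, hk⟩
    have hen := stepT_enabled h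
    have ha2 := a.2
    simp only [Wc, dif_pos hk]
    by_cases hka : k = (a : ℕ)
    · have hd1 : ((a:ℕ) < k+1 ∧ (k+1 ≤ (a:ℕ)+1 ∨ m ≤ (a:ℕ)+1)) := by omega
      have hd0 : ¬((a:ℕ) < k ∧ (k ≤ (a:ℕ)+1 ∨ m ≤ (a:ℕ)+1)) := by omega
      rw [if_neg hd0] at ihk
      rw [if_pos hd1,
        show t ⟨k, hk⟩ = false by rw [htv]; simp [hka],
        show s ⟨k, hk⟩ = true by rw [show (⟨k,hk⟩ : Fin m) = a from Fin.ext hka]; exact hen.1]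
      simp only [Bool.false_eq_true, if_false, if_true]
      omega
    · by_cases hka2 : k = (a : ℕ) + 1
      · have hm : (a:ℕ) + 1 < m := hka2 ▸ hk
        have hd1 : ¬((a:ℕ) < k+1 ∧ (k+1 ≤ (a:ℕ)+1 ∨ m ≤ (a:ℕ)+1)) := by omega
        have hd0 : ((a:ℕ) < k ∧ (k ≤ (a:ℕ)+1 ∨ m ≤ (a:ℕ)+1)) := by omega
        rw [if_pos hd0] at ihk
        rw [if_neg hd1,
          show t ⟨k, hk⟩ = true by rw [htv]; simp [hka, hka2],
          show s ⟨k, hk⟩ = false by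
            rw [show (⟨k,hk⟩ : Fin m) = ⟨(a:ℕ)+1, hm⟩ from Fin.ext hka2]; exact hen.2 hm]
        simp only [Bool.false_eq_true, if_false, if_true]
        omega
      · have hts : t ⟨k, hk⟩ = s ⟨k, hk⟩ := by rw [htv, if_neg hka, if_neg hka2]
        rw [hts]
        by_cases hc1 : (a:ℕ) < k ∧ (k ≤ (a:ℕ)+1 ∨ m ≤ (a:ℕ)+1)
        · rw [if_pos hc1] at ihk
          have : ((a:ℕ) < k+1 ∧ (k+1 ≤ (a:ℕ)+1 ∨ m ≤ (a:ℕ)+1)) := by omega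
          rw [if_pos this]
          omega
        · rw [if_neg hc1] at ihk
          have : ¬((a:ℕ) < k+1 ∧ (k+1 ≤ (a:ℕ)+1 ∨ m ≤ (a:ℕ)+1)) := by omega
          rw [if_neg this]
          omega

theorem count_steps {m : ℕ} {s t : Fin m → Bool} {l : List (Fin m)}
    (h : stepsT m s l = some t) (e : Fin m) :
    Wc m t ((e:ℕ)+1) + l.count e = Wc m s ((e:ℕ)+1) := by
  induction l generalizing s with
  | nil =>
    obtain rfl : s = t := Option.some_injective _ (by simpa [stepsT] using h)
    simp
  | cons a l ih =>
    rw [stepsT] at h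
    cases hstep : stepT m s a with
    | none => rw [hstep] at h; simp at h
    | some s1 =>
      rw [hstep] at h
      rw [Option.bind_some] at h
      have ihk := ih h
      have hW := Wc_step hstep ((e:ℕ)+1) e.2
      have he2 := e.2
      have ha2 := a.2
      have hcond : ((a:ℕ) < (e:ℕ)+1 ∧ ((e:ℕ)+1 ≤ (a:ℕ)+1 ∨ m ≤ (a:ℕ)+1)) ↔ (a = e) := by
        rw [Fin.ext_iff]; omega
      rw [List.count_cons]
      by_cases hae : a = e
      · rw [if_pos (hcond.mpr hae)] at hW
        simp only [hae, beq_self_eq_true, if_true]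
        omega
      · rw [if_neg (fun hc => hae (hcond.mp hc))] at hW
        rw [if_neg (by simpa using hae)]
        omega

theorem count_eq_of_steps {m : ℕ} {s t : Fin m → Bool} {u v : List (Fin m)}
    (hu : stepsT m s u = some t) (hv : stepsT m s v = some t) (e : Fin m) :
    u.count e = v.count e := by
  have h1 := count_steps hu e
  have h2 := count_steps hv e
  omega

theorem eq_nil_of_steps_self {m : ℕ} {s : Fin m → Bool} {u : List (Fin m)}
    (hu : stepsT m s u = some s) : u = [] := by
  have : ∀ e : Fin m, u.count e = 0 := fun e =>
    count_eq_of_steps hu (show stepsT m s [] = some s from rfl) e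
  cases u with
  | nil => rfl
  | cons a l =>
    have h2 := this a
    rw [List.count_cons] at h2
    simp at h2

theorem steps_cons_iff {m : ℕ} {s t : Fin m → Bool} {a : Fin m} {l : List (Fin m)} :
    stepsT m s (a :: l) = some t ↔ ∃ s1, stepT m s a = some s1 ∧ stepsT m s1 l = some t := by
  rw [stepsT]
  cases hstep : stepT m s a with
  | none => simp
  | some s1 => simp

theorem front_commute {m : ℕ} (b : Fin m) :
    ∀ (u : List (Fin m)) (s t sb : Fin m → Bool), stepT m s b = some sb →
      stepsT m s u = some t → b ∈ u →
      ∃ w, stepsT m sb w = some t ∧ TraceEquiv (indepT m) u (b :: w) := by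
  intro u
  induction u with
  | nil => intro _ _ _ _ _ hmem; simp at hmem
  | cons a u' ih =>
    intro s t sb hb hu hmem
    obtain ⟨sa, hstep, hu'⟩ := steps_cons_iff.mp hu
    by_cases hab : a = b
    · subst hab
      obtain rfl : sa = sb := Option.some_injective _ (hstep.symm.trans hb)
      exact ⟨u', hu', Relation.EqvGen.refl _⟩
    · have hmem' : b ∈ u' := by
        rcases List.mem_cons.mp hmem with h | h
        · exact absurd h.symm hab
        · exact h
      have hind : indepT m a b := indep_of_enabled hab hstep hb
      obtain ⟨r, hr1, hr2⟩ := diamond hind hstep hb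
      obtain ⟨w', hw', hequiv⟩ := ih sa t r hr1 hu' hmem'
      refine ⟨a :: w', ?_, ?_⟩
      · exact steps_cons_iff.mpr ⟨r, hr2, hw'⟩
      · refine Relation.EqvGen.trans _ _ _
          (TraceEquiv.append_left _ [a] hequiv) ?_
        exact Relation.EqvGen.rel _ _ (TraceStep.swap [] w' a b hind)

theorem count_nil_eq_nil {m : ℕ} {u : List (Fin m)} (h : ∀ e : Fin m, u.count e = 0) :
    u = [] := by
  cases u with
  | nil => rfl
  | cons a l => have h2 := h a; rw [List.count_cons] at h2; simp at h2

theorem trace_unique_aux {m : ℕ} :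
    ∀ (N : ℕ) (u v : List (Fin m)) (s t : Fin m → Bool), u.length ≤ N →
      stepsT m s u = some t → stepsT m s v = some t → TraceEquiv (indepT m) u v := by
  intro N
  induction N with
  | zero =>
    intro u v s t hlen hu hv
    obtain rfl : u = [] := List.eq_nil_of_length_eq_zero (by omega)
    obtain rfl : s = t := Option.some_injective _ (by simpa [stepsT] using hu)
    obtain rfl : v = [] := count_nil_eq_nil fun e => (count_eq_of_steps hv hu e).trans rfl
    exact Relation.EqvGen.refl _
  | succ N ih =>
    intro u v s t hlen hu hv
    cases u with
    | nil =>
      obtain rfl : s = t := Option.some_injective _ (by simpa [stepsT] using hu)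
      obtain rfl : v = [] := count_nil_eq_nil fun e => (count_eq_of_steps hv hu e).trans rfl
      exact Relation.EqvGen.refl _
    | cons a u' =>
      cases v with
      | nil =>
        obtain rfl : s = t := Option.some_injective _ (by simpa [stepsT] using hv)
        exact absurd (count_nil_eq_nil (u := a :: u')
          fun e => (count_eq_of_steps hu hv e).trans rfl) (by simp)
      | cons b v' =>
        obtain ⟨sa, hsa, hu'⟩ := steps_cons_iff.mp hu
        obtain ⟨sb, hsb, hv'⟩ := steps_cons_iff.mp hv
        by_cases hab : a = b
        · subst hab
          obtain rfl : sa = sb := Option.some_injective _ (hsa.symm.trans hsb)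
          exact TraceEquiv.append_left _ [a]
            (ih u' v' sa t (by simpa using hlen) hu' hv')
        · have hmem : b ∈ a :: u' := by
            have hc := count_eq_of_steps hu hv b
            simp only [List.count_cons, beq_self_eq_true, if_true] at hc
            by_contra hnm
            have h1 : b ∉ u' := fun h => hnm (List.mem_cons_of_mem _ h)
            simp [List.count_eq_zero_of_not_mem h1, hab] at hc
          obtain ⟨w, hw, hequiv⟩ := front_commute b (a :: u') s t sb hsb hu hmem
          have hlenw : w.length ≤ N := by
            have := TraceEquiv.length_eq _ hequiv
            simp only [List.length_cons] at this hlen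
            omega
          have h2 := ih w v' sb t hlenw hw hv'
          exact Relation.EqvGen.trans _ _ _ hequiv
            (TraceEquiv.append_left _ [b] h2)

/-- Weighted potential of places `< k`: a token at place `j` weighs `m - j`. -/
def Pw (m : ℕ) (s : Fin m → Bool) : ℕ → ℕ
  | 0 => 0
  | k+1 => Pw m s k + (if h : k < m then (if s ⟨k, h⟩ then m - k else 0) else 0)

theorem Pw_step {m : ℕ} {s t : Fin m → Bool} {a : Fin m} (h : stepT m s a = some t) :
    ∀ k, k ≤ m →
      Pw m t k + (if (a:ℕ)+1 < k then 1 else if (a:ℕ) < k then m - (a:ℕ) else 0)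
        = Pw m s k := by
  intro k
  induction k with
  | zero => simp [Pw]
  | succ k ih =>
    intro hk1
    have hk : k < m := hk1
    have ihk := ih (le_of_lt hk)
    have htv := stepT_apply h ⟨k, hk⟩
    have hen := stepT_enabled h
    have ha2 := a.2
    simp only [Pw, dif_pos hk]
    by_cases hka : k = (a : ℕ)
    · rw [if_neg (show ¬((a:ℕ)+1 < k) by omega),
        if_neg (show ¬((a:ℕ) < k) by omega)] at ihk
      rw [if_neg (show ¬((a:ℕ)+1 < k+1) by omega),
        if_pos (show (a:ℕ) < k+1 by omega),
        show t ⟨k, hk⟩ = false by rw [htv]; simp [hka],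
        show s ⟨k, hk⟩ = true by rw [show (⟨k,hk⟩ : Fin m) = a from Fin.ext hka]; exact hen.1]
      simp only [if_true, if_false, Bool.false_eq_true]
      omega
    · by_cases hka2 : k = (a : ℕ) + 1
      · have hm : (a:ℕ) + 1 < m := hka2 ▸ hk
        rw [if_neg (show ¬((a:ℕ)+1 < k) by omega),
          if_pos (show (a:ℕ) < k by omega)] at ihk
        rw [if_pos (show (a:ℕ)+1 < k+1 by omega),
          show t ⟨k, hk⟩ = true by rw [htv]; simp [hka, hka2],
          show s ⟨k, hk⟩ = false by
            rw [show (⟨k,hk⟩ : Fin m) = ⟨(a:ℕ)+1, hm⟩ from Fin.ext hka2]; exact hen.2 hm]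
        simp only [if_true, if_false, Bool.false_eq_true]
        omega
      · have hts : t ⟨k, hk⟩ = s ⟨k, hk⟩ := by rw [htv, if_neg hka, if_neg hka2]
        rw [hts]
        by_cases hc1 : (a:ℕ)+1 < k
        · rw [if_pos hc1] at ihk
          rw [if_pos (show (a:ℕ)+1 < k+1 by omega)]
          omega
        · rw [if_neg hc1] at ihk
          by_cases hc2 : (a:ℕ) < k
          · rw [if_pos hc2] at ihk
            rw [if_neg (show ¬((a:ℕ)+1 < k+1) by omega),
              if_pos (show (a:ℕ) < k+1 by omega)]
            omega
          · rw [if_neg hc2] at ihk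
            rw [if_neg (show ¬((a:ℕ)+1 < k+1) by omega),
              if_neg (show ¬((a:ℕ) < k+1) by omega)]
            omega

theorem Pw_step_total {m : ℕ} {s t : Fin m → Bool} {a : Fin m} (h : stepT m s a = some t) :
    Pw m t m + 1 = Pw m s m := by
  have := Pw_step h m le_rfl
  have ha2 := a.2
  by_cases hc : (a:ℕ)+1 < m
  · rwa [if_pos hc] at this
  · rw [if_neg hc, if_pos (by omega), show m - (a:ℕ) = 1 by omega] at this
    exact this

theorem Pw_mono {m : ℕ} {s s' : Fin m → Bool} (h : ∀ x, s x = true → s' x = true) :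
    ∀ k, Pw m s k ≤ Pw m s' k := by
  intro k
  induction k with
  | zero => simp [Pw]
  | succ k ih =>
    simp only [Pw]
    by_cases hk : k < m
    · rw [dif_pos hk, dif_pos hk]
      cases hs : s ⟨k, hk⟩
      · simp; omega
      · rw [h _ hs]; simp; omega
    · rw [dif_neg hk, dif_neg hk]; omega

/-- Reach the all-false state from anywhere. -/
theorem reach_bot {m : ℕ} : ∀ (N : ℕ) (s : Fin m → Bool), Pw m s m ≤ N →
    ∃ l, stepsT m s l = some (fun _ => false) := by
  intro N
  induction N with
  | zero =>
    intro s hs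
    by_cases h : s = fun _ => false
    · exact ⟨[], by rw [h]; rfl⟩
    · exfalso
      obtain ⟨a, ha⟩ : ∃ a, s a = true := by
        by_contra hc
        push_neg at hc
        exact h (funext fun x => by simpa using hc x)
      -- a token gives positive potential; contradiction with Pw = 0
      -- find maximal token
      classical
      obtain ⟨a, ha, hmax⟩ := Finset.exists_max_image (Finset.univ.filter fun j => s j = true)
        (fun j => (j : ℕ)) ⟨a, by simpa using ha⟩
      have ha' : s a = true := by simpa using ha
      have ha2 : ∀ (h2 : (a:ℕ)+1 < m), s ⟨(a:ℕ)+1, h2⟩ = false := by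
        intro h2
        by_contra hc
        have : (⟨(a:ℕ)+1, h2⟩ : Fin m) ∈ Finset.univ.filter fun j => s j = true := by
          simpa using Bool.not_eq_false _ |>.mp hc
        have := hmax _ this
        simp at this
      obtain ⟨t, ht⟩ := stepT_make ha' ha2
      have := Pw_step_total ht
      omega
  | succ N ih =>
    intro s hs
    by_cases h : s = fun _ => false
    · exact ⟨[], by rw [h]; rfl⟩
    · obtain ⟨a, ha⟩ : ∃ a, s a = true := by
        by_contra hc
        push_neg at hc
        exact h (funext fun x => by simpa using hc x)
      classical
      obtain ⟨a, ha, hmax⟩ := Finset.exists_max_image (Finset.univ.filter fun j => s j = true)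
        (fun j => (j : ℕ)) ⟨a, by simpa using ha⟩
      have ha' : s a = true := by simpa using ha
      have ha2 : ∀ (h2 : (a:ℕ)+1 < m), s ⟨(a:ℕ)+1, h2⟩ = false := by
        intro h2
        by_contra hc
        have : (⟨(a:ℕ)+1, h2⟩ : Fin m) ∈ Finset.univ.filter fun j => s j = true := by
          simpa using Bool.not_eq_false _ |>.mp hc
        have := hmax _ this
        simp at this
      obtain ⟨t, ht⟩ := stepT_make ha' ha2
      have hP := Pw_step_total ht
      obtain ⟨l, hl⟩ := ih t (by omega)
      exact ⟨a :: l, steps_cons_iff.mpr ⟨t, ht, hl⟩⟩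

/-- Reach any state from the all-true state. -/
theorem reach_top {m : ℕ} : ∀ (N : ℕ) (t : Fin m → Bool),
    Pw m (fun _ => true) m - Pw m t m ≤ N →
    ∃ l, stepsT m (fun _ => true) l = some t := by
  intro N
  induction N with
  | zero =>
    intro t ht
    by_cases h : t = fun _ => true
    · exact ⟨[], by rw [h]; rfl⟩
    · exfalso
      obtain ⟨a, ha⟩ : ∃ a, t a = false := by
        by_contra hc
        push_neg at hc
        exact h (funext fun x => by simpa using hc x)
      classical
      obtain ⟨a, ha, hmax⟩ := Finset.exists_max_image (Finset.univ.filter fun j => t j = false)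
        (fun j => (j : ℕ)) ⟨a, by simpa using ha⟩
      have ha' : t a = false := by simpa using ha
      set t' : Fin m → Bool := fun x =>
        if x = a then true else if (x:ℕ) = (a:ℕ)+1 then false else t x with ht'
      have h1 : t' a = true := by rw [ht']; simp
      have h2 : ∀ (h2 : (a:ℕ)+1 < m), t' ⟨(a:ℕ)+1, h2⟩ = false := by
        intro h2
        have hne : (⟨(a:ℕ)+1, h2⟩ : Fin m) ≠ a := by
          intro hc; have := congrArg Fin.val hc; simp at this
        simp [ht', hne]
      obtain ⟨r, hr⟩ := stepT_make h1 h2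
      have hrt : r = t := by
        funext x
        rw [stepT_apply hr x]
        by_cases hx1 : (x:ℕ) = (a:ℕ)
        · rw [if_pos hx1, show x = a from Fin.ext hx1] at *
          exact ha'.symm
        · rw [if_neg hx1]
          by_cases hx2 : (x:ℕ) = (a:ℕ)+1
          · rw [if_pos hx2]
            by_contra hc
            have hxf : t x = false := by
              cases hxv : t x
              · rfl
              · rw [hxv] at hc; exact absurd rfl hc
            have : x ∈ Finset.univ.filter fun j => t j = false := by simpa using hxf
            have := hmax _ this
            omega
          · rw [if_neg hx2]
            simp [ht', show x ≠ a from fun hc => hx1 (by rw [hc]), hx2]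
      have hP := Pw_step_total hr
      rw [hrt] at hP
      have hle : Pw m t' m ≤ Pw m (fun _ => true) m := Pw_mono (fun _ _ => rfl) m
      omega
  | succ N ih =>
    intro t ht
    by_cases h : t = fun _ => true
    · exact ⟨[], by rw [h]; rfl⟩
    · obtain ⟨a, ha⟩ : ∃ a, t a = false := by
        by_contra hc
        push_neg at hc
        exact h (funext fun x => by simpa using hc x)
      classical
      obtain ⟨a, ha, hmax⟩ := Finset.exists_max_image (Finset.univ.filter fun j => t j = false)
        (fun j => (j : ℕ)) ⟨a, by simpa using ha⟩
      have ha' : t a = false := by simpa using ha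
      set t' : Fin m → Bool := fun x =>
        if x = a then true else if (x:ℕ) = (a:ℕ)+1 then false else t x with ht'
      have h1 : t' a = true := by rw [ht']; simp
      have h2 : ∀ (h2 : (a:ℕ)+1 < m), t' ⟨(a:ℕ)+1, h2⟩ = false := by
        intro h2
        have hne : (⟨(a:ℕ)+1, h2⟩ : Fin m) ≠ a := by
          intro hc; have := congrArg Fin.val hc; simp at this
        simp [ht', hne]
      obtain ⟨r, hr⟩ := stepT_make h1 h2
      have hrt : r = t := by
        funext x
        rw [stepT_apply hr x]
        by_cases hx1 : (x:ℕ) = (a:ℕ)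
        · rw [if_pos hx1, show x = a from Fin.ext hx1] at *
          exact ha'.symm
        · rw [if_neg hx1]
          by_cases hx2 : (x:ℕ) = (a:ℕ)+1
          · rw [if_pos hx2]
            by_contra hc
            have hxf : t x = false := by
              cases hxv : t x
              · rfl
              · rw [hxv] at hc; exact absurd rfl hc
            have : x ∈ Finset.univ.filter fun j => t j = false := by simpa using hxf
            have := hmax _ this
            omega
          · rw [if_neg hx2]
            simp [ht', show x ≠ a from fun hc => hx1 (by rw [hc]), hx2]
      have hP := Pw_step_total hr
      rw [hrt] at hP
      have hle : Pw m t' m ≤ Pw m (fun _ => true) m := Pw_mono (fun _ _ => rfl) m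
      obtain ⟨l, hl⟩ := ih t' (by omega)
      refine ⟨l ++ [a], ?_⟩
      rw [stepsT_append, hl, Option.bind_some]
      exact steps_cons_iff.mpr ⟨r, hr, hrt ▸ rfl⟩


instance instSubsingletonHomStN (m : ℕ) (x y : StN m) : Subsingleton (x ⟶ y) := by
  constructor
  intro f g
  induction f using Quotient.inductionOn with
  | h lf =>
  induction g using Quotient.inductionOn with
  | h lg =>
  exact Quotient.sound (trace_unique_aux lf.1.length lf.1 lg.1 x.s y.s le_rfl lf.2 lg.2)

def botS (m : ℕ) : StN m := ⟨fun _ => false⟩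
def topS (m : ℕ) : StN m := ⟨fun _ => true⟩

noncomputable def isTerminalBot (m : ℕ) : IsTerminal (botS m) := by
  have h : ∀ X : StN m, Nonempty (X ⟶ botS m) := fun X => by
    obtain ⟨l, hl⟩ := reach_bot (Pw m X.s m) X.s le_rfl
    exact ⟨Quotient.mk _ ⟨l, hl⟩⟩
  exact IsTerminal.ofUniqueHom (fun X => (h X).some) (fun X f => Subsingleton.elim _ _)

noncomputable def isInitialTop (m : ℕ) : IsInitial (topS m) := by
  have h : ∀ X : StN m, Nonempty (topS m ⟶ X) := fun X => by
    obtain ⟨l, hl⟩ := reach_top (Pw m (fun _ => true) m - Pw m X.s m) X.s le_rfl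
    exact ⟨Quotient.mk _ ⟨l, hl⟩⟩
  exact IsInitial.ofUniqueHom (fun X => (h X).some) (fun X f => Subsingleton.elim _ _)

/-- For the nets `N_n` (pipeline with `t₁` deleted, `m = n-1` places and events), the
directed homology groups `H_k^ε(N_n) = colim_k Δ^εℤ` vanish for `k > 0` and are `ℤ` for
`k = 0`, for both `ε ∈ {0,1}`.  (`HasProjectiveResolutions` holds for these functor
categories; it is the standing assumption under which the derived colimits are defined.) -/
theorem directed_homology_of_Nn (n : ℕ) (hn : 2 ≤ n)
    [HasProjectiveResolutions (StN (n - 1) ⥤ AddCommGrpCat.{0})]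
    [HasProjectiveResolutions ((StN (n - 1))ᵒᵖ ⥤ AddCommGrpCat.{0})] :
    (∀ k, 0 < k → IsZero ((colim.leftDerived k).obj (Delta0 (n - 1)))) ∧
    Nonempty (colim.obj (Delta0 (n - 1)) ≅ AddCommGrpCat.of ℤ) ∧
    (∀ k, 0 < k → IsZero ((colim.leftDerived k).obj (Delta1 (n - 1)))) ∧
    Nonempty (colim.obj (Delta1 (n - 1)) ≅ AddCommGrpCat.of ℤ) := by
  refine ⟨?_, ?_, ?_, ?_⟩
  · exact fun k hk =>
      isZero_leftDerived_colim_of_terminal (isTerminalBot (n - 1)) (Delta0 (n - 1)) k hk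
  · exact ⟨colimObjIso (isTerminalBot (n - 1)) (Delta0 (n - 1))⟩
  · exact fun k hk =>
      isZero_leftDerived_colim_of_terminal (terminalOpOfInitial (isInitialTop (n - 1)))
        (Delta1 (n - 1)) k hk
  · exact ⟨colimObjIso (terminalOpOfInitial (isInitialTop (n - 1))) (Delta1 (n - 1))⟩
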